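/- Let n, k be integers with n ≥ 1 and 1 ≤ k ≤ n, let G be a finite simple graph with vertex set {v_1,…,v_n}, and let G′ be the dominating-set reduction graph of (G,k). If i_1,…,i_k ∈ [n] are pairwise distinct indices such that {v_{i_1},…,v_{i_k}} is a dominating set of G, then the set {w_{i_1},…,w_{i_k}, w_{n+k+2}} is a (k+1)-independent set of G′ that is an isolated vertex of the token-sliding reconfiguration graph TS_{k+1}(G′), i.e. it has no neighbour in TS_{k+1}(G′). -/

import Mathlib

/-- An independent set of a graph, as a finset of pairwise non-adjacent vertices. -/
def IsIndepF {V : Type*} (H : SimpleGraph V) (I : Finset V) : Prop :=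
  ∀ u ∈ I, ∀ v ∈ I, ¬ H.Adj u v

/-- The token-sliding reconfiguration graph `TS_m(H)`. -/
def TSGraph {V : Type*} [DecidableEq V] (H : SimpleGraph V) (m : ℕ) :
    SimpleGraph {I : Finset V // I.card = m ∧ IsIndepF H I} where
  Adj I J := ∃ u v, J.1 \ I.1 = {u} ∧ I.1 \ J.1 = {v} ∧ H.Adj u v
  symm := by constructor; rintro I J ⟨u, v, h1, h2, h3⟩; exact ⟨v, u, h2, h1, h3.symm⟩
  loopless := by
    constructor
    rintro I ⟨u, v, h1, h2, h3⟩
    rw [Finset.sdiff_self] at h1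
    exact (Finset.singleton_ne_empty u) h1.symm

/-- `D` is a dominating set of `G`. -/
def IsDomSet {V : Type*} (G : SimpleGraph V) (D : Finset V) : Prop :=
  ∀ v : V, v ∈ D ∨ ∃ d ∈ D, G.Adj v d

/-- Vertices of the dominating-set reduction graph. -/
inductive RVert (n k : ℕ) : Type where
  | c : Fin (n + k + 1) → RVert n k
  | w : Fin (n + k + 2) → RVert n k
  | x : Fin (n + k + 2) → RVert n k
  | y : Fin (n + k + 2) → RVert n k
deriving DecidableEq

/-- The dominating-set reduction graph `G'` of `(G, k)` (0-based indices). -/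
def redGraph (n k : ℕ) (G : SimpleGraph (Fin n)) : SimpleGraph (RVert n k) :=
  SimpleGraph.fromRel (fun a b =>
    match a, b with
    | .c i, .c j => i ≠ j
    | .c i, .w j =>
        (∃ (hi : i.val < n) (hj : j.val < n), G.Adj ⟨i.val, hi⟩ ⟨j.val, hj⟩)
        ∨ (i.val = j.val)
        ∨ (i.val < n ∧ j.val = n + k + 1)
    | .x i, .y j => i = j
    | .x _, .c _ => True
    | _, _ => False)


lemma red_not_adj_w_w (n k : ℕ) (G : SimpleGraph (Fin n)) (a b : Fin (n + k + 2)) :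
    ¬ (redGraph n k G).Adj (RVert.w a) (RVert.w b) := by
  rw [redGraph, SimpleGraph.fromRel_adj]
  rintro ⟨-, h | h⟩ <;> exact h

lemma red_adj_c_w (n k : ℕ) (G : SimpleGraph (Fin n)) (i : Fin (n + k + 1))
    (j : Fin (n + k + 2))
    (h : (∃ (hi : i.val < n) (hj : j.val < n), G.Adj ⟨i.val, hi⟩ ⟨j.val, hj⟩)
        ∨ (i.val = j.val) ∨ (i.val < n ∧ j.val = n + k + 1)) :
    (redGraph n k G).Adj (RVert.c i) (RVert.w j) := by
  rw [redGraph, SimpleGraph.fromRel_adj]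
  exact ⟨by simp, Or.inl h⟩

lemma red_adj_to_w (n k : ℕ) (G : SimpleGraph (Fin n)) (u : RVert n k)
    (j : Fin (n + k + 2)) (h : (redGraph n k G).Adj u (RVert.w j)) :
    ∃ i : Fin (n + k + 1), u = RVert.c i ∧
      ((∃ (hi : i.val < n) (hj : j.val < n), G.Adj ⟨i.val, hi⟩ ⟨j.val, hj⟩)
        ∨ (i.val = j.val) ∨ (i.val < n ∧ j.val = n + k + 1)) := by
  rw [redGraph, SimpleGraph.fromRel_adj] at h
  obtain ⟨hne, h⟩ := h
  match u with
  | .c i => exact ⟨i, rfl, h.resolve_right (fun h' => h')⟩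
  | .w a => exact h.elim (fun h' => h'.elim) (fun h' => h'.elim)
  | .x a => exact h.elim (fun h' => h'.elim) (fun h' => h'.elim)
  | .y a => exact h.elim (fun h' => h'.elim) (fun h' => h'.elim)

theorem dominatingSet_gives_isolated_vertex
    (n k : ℕ) (hn : 1 ≤ n) (hk1 : 1 ≤ k) (hkn : k ≤ n) (G : SimpleGraph (Fin n))
    (f : Fin k → Fin n) (hf : Function.Injective f)
    (hdom : IsDomSet G (Finset.image f Finset.univ)) :
    ∃ hI : (Finset.image (fun t : Fin k =>
              RVert.w (n := n) (k := k) (Fin.castLE (by omega) (f t))) Finset.univ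
            ∪ {RVert.w (Fin.last (n + k + 1))}).card = k + 1 ∧
           IsIndepF (redGraph n k G)
            (Finset.image (fun t : Fin k =>
              RVert.w (n := n) (k := k) (Fin.castLE (by omega) (f t))) Finset.univ
            ∪ {RVert.w (Fin.last (n + k + 1))}),
      ∀ J, ¬ (TSGraph (redGraph n k G) (k + 1)).Adj
        ⟨Finset.image (fun t : Fin k =>
              RVert.w (n := n) (k := k) (Fin.castLE (by omega) (f t))) Finset.univ
            ∪ {RVert.w (Fin.last (n + k + 1))}, hI⟩ J := by
  classical
  have hginj : Function.Injective (fun t : Fin k =>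
      RVert.w (n := n) (k := k) (Fin.castLE (by omega) (f t))) := by
    intro a b h
    simp only [RVert.w.injEq] at h
    apply hf
    have := congrArg Fin.val h
    simpa [Fin.ext_iff] using this
  have hlast_not : RVert.w (n := n) (k := k) (Fin.last (n + k + 1)) ∉
      Finset.image (fun t : Fin k =>
        RVert.w (n := n) (k := k) (Fin.castLE (by omega) (f t))) Finset.univ := by
    simp only [Finset.mem_image, Finset.mem_univ, true_and, RVert.w.injEq, not_exists]
    intro t h
    have := congrArg Fin.val h
    simp [Fin.last] at this
    omega
  have hcard : (Finset.image (fun t : Fin k =>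
        RVert.w (n := n) (k := k) (Fin.castLE (by omega) (f t))) Finset.univ
      ∪ {RVert.w (Fin.last (n + k + 1))}).card = k + 1 := by
    rw [Finset.card_union_of_disjoint (by simpa using hlast_not),
      Finset.card_image_of_injective _ hginj, Finset.card_univ, Fintype.card_fin,
      Finset.card_singleton]
  have hmem : ∀ x, x ∈ Finset.image (fun t : Fin k =>
        RVert.w (n := n) (k := k) (Fin.castLE (by omega) (f t))) Finset.univ
      ∪ {RVert.w (Fin.last (n + k + 1))} ↔
      (∃ t : Fin k, x = RVert.w (Fin.castLE (by omega) (f t))) ∨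
        x = RVert.w (Fin.last (n + k + 1)) := by
    intro x
    simp only [Finset.mem_union, Finset.mem_image, Finset.mem_univ, true_and,
      Finset.mem_singleton, eq_comm]
  have hindep : IsIndepF (redGraph n k G)
      (Finset.image (fun t : Fin k =>
        RVert.w (n := n) (k := k) (Fin.castLE (by omega) (f t))) Finset.univ
      ∪ {RVert.w (Fin.last (n + k + 1))}) := by
    intro u hu v hv
    rw [hmem] at hu hv
    obtain ⟨t, rfl⟩ | rfl := hu <;> obtain ⟨t', rfl⟩ | rfl := hv <;>
      exact red_not_adj_w_w n k G _ _
  refine ⟨⟨hcard, hindep⟩, ?_⟩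
  intro J hJ
  obtain ⟨u, v, h1, h2, hadj⟩ := hJ
  set I0 : Finset (RVert n k) := Finset.image (fun t : Fin k =>
        RVert.w (n := n) (k := k) (Fin.castLE (by omega) (f t))) Finset.univ
      ∪ {RVert.w (Fin.last (n + k + 1))} with hI0def
  have hvI : v ∈ I0 ∧ v ∉ J.1 := by
    have : v ∈ I0 \ J.1 := by rw [h2]; exact Finset.mem_singleton_self v
    exact Finset.mem_sdiff.mp this
  have huJ : u ∈ J.1 ∧ u ∉ I0 := by
    have : u ∈ J.1 \ I0 := by rw [h1]; exact Finset.mem_singleton_self u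
    exact Finset.mem_sdiff.mp this
  have hsub : ∀ x ∈ I0, x ≠ v → x ∈ J.1 := by
    intro x hx hxv
    by_contra hxJ
    have : x ∈ I0 \ J.1 := Finset.mem_sdiff.mpr ⟨hx, hxJ⟩
    rw [h2, Finset.mem_singleton] at this
    exact hxv this
  -- v is a w-vertex
  have hvI' := (hmem v).mp hvI.1
  have hJindep : IsIndepF (redGraph n k G) J.1 := J.2.2
  -- u is a c-vertex adjacent to v
  obtain ⟨s, hvs⟩ : ∃ s : Fin (n + k + 2), v = RVert.w s := by
    obtain ⟨t, rfl⟩ | rfl := hvI' <;> exact ⟨_, rfl⟩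
  rw [hvs] at hadj
  obtain ⟨i, rfl, hD⟩ := red_adj_to_w n k G u s hadj
  by_cases hin : i.val < n
  · -- c_i with i < n
    by_cases hvlast : v = RVert.w (Fin.last (n + k + 1))
    · -- v is w_last : use domination
      have hi' : (⟨i.val, hin⟩ : Fin n) ∈ Finset.image f Finset.univ ∨
          ∃ d ∈ Finset.image f Finset.univ, G.Adj ⟨i.val, hin⟩ d := hdom _
      have : ∃ t : Fin k, (redGraph n k G).Adj (RVert.c i)
          (RVert.w (Fin.castLE (by omega) (f t))) := by
        rcases hi' with h | ⟨d, hd, hadjd⟩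
        · simp only [Finset.mem_image, Finset.mem_univ, true_and] at h
          obtain ⟨t, ht⟩ := h
          refine ⟨t, red_adj_c_w n k G _ _ (Or.inr (Or.inl ?_))⟩
          have := congrArg Fin.val ht
          simpa using this.symm
        · simp only [Finset.mem_image, Finset.mem_univ, true_and] at hd
          obtain ⟨t, rfl⟩ := hd
          refine ⟨t, red_adj_c_w n k G _ _ (Or.inl ⟨hin, ?_, ?_⟩)⟩
          · simpa using (f t).isLt
          · convert hadjd using 2 <;> simp
      obtain ⟨t, hadj2⟩ := this
      have hwt : RVert.w (n := n) (k := k) (Fin.castLE (by omega) (f t)) ∈ J.1 := by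
        apply hsub _ _ ?_
        · rw [hmem]; exact Or.inl ⟨t, rfl⟩
        · rw [hvlast]
          intro h
          have := congrArg Fin.val (RVert.w.inj h)
          simp [Fin.last] at this
          have := (f t).isLt
          omega
      exact hJindep _ huJ.1 _ hwt hadj2
    · -- v ≠ w_last : w_last ∈ J, adjacent to c_i
      have hwl : RVert.w (n := n) (k := k) (Fin.last (n + k + 1)) ∈ J.1 := by
        apply hsub _ _ (fun h => hvlast h.symm)
        rw [hmem]; exact Or.inr rfl
      have hadj2 : (redGraph n k G).Adj (RVert.c i)
          (RVert.w (Fin.last (n + k + 1))) :=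
        red_adj_c_w n k G _ _ (Or.inr (Or.inr ⟨hin, by simp [Fin.last]⟩))
      exact hJindep _ huJ.1 _ hwl hadj2
  · -- i ≥ n : no possible adjacency, contradiction
    have hs : s.val < n ∨ s.val = n + k + 1 := by
      rcases hvI' with ⟨t, ht⟩ | ht <;> rw [hvs] at ht <;>
        have := congrArg Fin.val (RVert.w.inj ht)
      · left; rw [this]; simpa using (f t).isLt
      · right; rw [this]; simp [Fin.last]
    have hi2 := i.isLt
    rcases hD with ⟨hi', -⟩ | h | ⟨hi', -⟩ <;> omega
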